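/- Any subgroup of G which is union-type-definable (using altogether < κ̄ parameters) and of bounded index in G contains a subgroup of the form ⋃_{n<ω} q^n_{ā}(𝔠) for some sequence ā ∈ ^{κ̄>}𝔠 with A* ⊆ Rang(ā). -/

import Mathlib

open FirstOrder Cardinal Set

universe u

namespace Paper886

section Basic

variable (L : FirstOrder.Language.{u, u}) (M : Type u) [L.Structure M]

/-- A first-order formula in `n` object variables together with a finite tuple of
parameters from `M`. -/
structure ParamFormula (n : ℕ) : Type u where
  m : ℕ
  toFormula : L.Formula (Fin n ⊕ Fin m)
  params : Fin m → M

variable {L M}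

/-- Realization of a parametrized formula at a tuple. -/
def ParamFormula.Realize {n : ℕ} (f : ParamFormula L M n) (v : Fin n → M) : Prop :=
  f.toFormula.Realize (Sum.elim v f.params)

/-- The parameters of `f` all lie in `B`. -/
def ParamFormula.paramsIn {n : ℕ} (f : ParamFormula L M n) (B : Set M) : Prop :=
  ∀ i, f.params i ∈ B

/-- The set of realizations of a partial 1-type. -/
def realizeSet (p : Set (ParamFormula L M 1)) : Set M :=
  {a | ∀ f ∈ p, f.Realize fun _ => a}

/-- The partial type `p` is over the parameter set `B`. -/
def IsTypeOver (p : Set (ParamFormula L M 1)) (B : Set M) : Prop :=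
  ∀ f ∈ p, f.paramsIn B

variable (L) in
/-- Two tuples realize the same type over a set `A` of parameters. -/
def SameType {α : Type u} (A : Set M) (a b : α → M) : Prop :=
  ∀ (n mp : ℕ) (φ : L.Formula (Fin n ⊕ Fin mp)) (vs : Fin n → α) (ps : Fin mp → M),
    (∀ i, ps i ∈ A) →
      (φ.Realize (Sum.elim (fun i => a (vs i)) ps) ↔ φ.Realize (Sum.elim (fun i => b (vs i)) ps))

variable (L M)

/-- `M` is `κ`-saturated: every finitely satisfiable 1-type over fewer than `κ`
parameters is realized in `M`. -/
def Saturated (κ : Cardinal.{u}) : Prop :=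
  ∀ B : Set M, #B < κ → ∀ p : Set (ParamFormula L M 1), IsTypeOver p B →
    (∀ s : Set (ParamFormula L M 1), s ⊆ p → s.Finite → ∃ a : M, ∀ f ∈ s, f.Realize fun _ => a) →
    ∃ a : M, a ∈ realizeSet p

/-- `Th(M)` is dependent (NIP): no formula has the independence property, where consistency
of a pattern is rendered as finite satisfiability in the (saturated) monster. -/
def IsDependent : Prop :=
  ∀ (nx np : ℕ) (φ : L.Formula (Fin nx ⊕ Fin np)) (a : ℕ → Fin np → M),
    ¬ ∀ (u : Set ℕ) (s : Finset ℕ), ∃ x : Fin nx → M,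
        ∀ i ∈ s, (φ.Realize (Sum.elim x (a i)) ↔ i ∈ u)

variable {L M}

/-- The cardinality `|T|` of the (complete) theory of `M`. -/
noncomputable def theoryCard (L : FirstOrder.Language.{u, u}) : Cardinal.{u} :=
  ℵ₀ ⊔ L.card

variable (L M)

/-- A type-definable group: a partial type `p*` over `A*` together with definitions
(over `A*`) of the group operations making `p*(𝔠)` a group. -/
structure DefGroup : Type u where
  AStar : Set M
  pStar : Set (ParamFormula L M 1)
  pStar_over : IsTypeOver pStar AStar
  mul : M → M → M
  inv : M → M
  one : M
  mul_definable : ∃ φ : ParamFormula L M 3, φ.paramsIn AStar ∧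
    ∀ x y z : M, (φ.Realize ![x, y, z] ↔ mul x y = z)
  inv_definable : ∃ φ : ParamFormula L M 2, φ.paramsIn AStar ∧
    ∀ x y : M, (φ.Realize ![x, y] ↔ inv x = y)
  one_definable : ∃ φ : ParamFormula L M 1, φ.paramsIn AStar ∧
    ∀ x : M, (φ.Realize ![x] ↔ x = one)
  one_mem' : one ∈ realizeSet pStar
  mul_mem' : ∀ x ∈ realizeSet pStar, ∀ y ∈ realizeSet pStar, mul x y ∈ realizeSet pStar
  inv_mem' : ∀ x ∈ realizeSet pStar, inv x ∈ realizeSet pStar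
  mul_assoc' : ∀ x ∈ realizeSet pStar, ∀ y ∈ realizeSet pStar, ∀ z ∈ realizeSet pStar,
    mul (mul x y) z = mul x (mul y z)
  one_mul' : ∀ x ∈ realizeSet pStar, mul one x = x
  mul_one' : ∀ x ∈ realizeSet pStar, mul x one = x
  inv_mul' : ∀ x ∈ realizeSet pStar, mul (inv x) x = one
  mul_inv' : ∀ x ∈ realizeSet pStar, mul x (inv x) = one

variable {L M}

namespace DefGroup

variable (D : DefGroup L M)

/-- The underlying set of the group `G = p*(𝔠)`. -/
def carrier : Set M := realizeSet D.pStar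

/-- `G` is abelian. -/
def IsAbelian : Prop := ∀ x ∈ D.carrier, ∀ y ∈ D.carrier, D.mul x y = D.mul y x

/-- `H` is a subgroup of `G`. -/
def IsSubgroup (H : Set M) : Prop :=
  H ⊆ D.carrier ∧ D.one ∈ H ∧ (∀ x ∈ H, ∀ y ∈ H, D.mul x y ∈ H) ∧ ∀ x ∈ H, D.inv x ∈ H

/-- `(G : H) ≤ c`: at most `c` left cosets of `H` cover `G`. -/
def indexLE (H : Set M) (c : Cardinal.{u}) : Prop :=
  ∃ S : Set M, S ⊆ D.carrier ∧ #S ≤ c ∧ ∀ g ∈ D.carrier, ∃ s ∈ S, D.mul (D.inv s) g ∈ H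

/-- `(G : H) < c`: fewer than `c` left cosets of `H` cover `G`. -/
def indexLT (H : Set M) (c : Cardinal.{u}) : Prop :=
  ∃ S : Set M, S ⊆ D.carrier ∧ #S < c ∧ ∀ g ∈ D.carrier, ∃ s ∈ S, D.mul (D.inv s) g ∈ H

/-- The realization set of the partial type `q^n_Γ`. -/
def qSet (Γ : Set (ParamFormula L M 1)) (n : ℕ) : Set M :=
  {c | ∃ d : Fin n → M × M,
    (∀ ℓ, (d ℓ).1 ∈ D.carrier ∧ (d ℓ).2 ∈ D.carrier) ∧
    (∀ ℓ, ∀ f ∈ Γ, (f.Realize fun _ => (d ℓ).1) ↔ (f.Realize fun _ => (d ℓ).2)) ∧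
    c = (List.ofFn fun ℓ => D.mul (D.inv (d ℓ).1) (d ℓ).2).foldr D.mul D.one}

/-- The realization set of `q^n_{ā}`, i.e. `q^n_{Γ_ā}` where `Γ_ā` consists of all
formulas with parameters in the range of `ā`. -/
def qTupleSet {α : Type u} (a : α → M) (n : ℕ) : Set M :=
  D.qSet {f : ParamFormula L M 1 | f.paramsIn (Set.range a)} n

end DefGroup

end Basic

variable {L : FirstOrder.Language.{u, u}} {M : Type u} [L.Structure M]

variable (L) in
/-- `X` is the union of fewer than `κ` realization sets of types over `B`. -/
def UnionTypeDefOver (X B : Set M) (κ : Cardinal.{u}) : Prop :=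
  ∃ ι : Type u, #ι < κ ∧ ∃ P : ι → Set (ParamFormula L M 1),
    (∀ i, IsTypeOver (P i) B) ∧ X = ⋃ i, realizeSet (P i)

variable (L) in
/-- `X` is union-type-definable (with fewer than `κ` parameters altogether). -/
def UnionTypeDefinable (X : Set M) (κ : Cardinal.{u}) : Prop :=
  ∃ B : Set M, #B < κ ∧ UnionTypeDefOver L X B κ

/-- `G_q = (p* ∪ q)(𝔠)`. -/
def Gq (D : DefGroup L M) (q : Set (ParamFormula L M 1)) : Set M :=
  realizeSet (D.pStar ∪ q)

/-- `R_B`: the family of 1-types `q` over `B` such that `G_q` is a subgroup of `G`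
of index `< κ`. -/
def RB (D : DefGroup L M) (κ : Cardinal.{u}) (B : Set M) : Set (Set (ParamFormula L M 1)) :=
  {q | IsTypeOver q B ∧ D.IsSubgroup (Gq D q) ∧ D.indexLT (Gq D q) κ}

/-- `q_B`, the union of all members of `R_B`. -/
def qB (D : DefGroup L M) (κ : Cardinal.{u}) (B : Set M) : Set (ParamFormula L M 1) :=
  ⋃₀ RB D κ B

/-- `G_B = q_B(𝔠) ∩ G`. -/
def GB (D : DefGroup L M) (κ : Cardinal.{u}) (B : Set M) : Set M :=
  realizeSet (qB D κ B) ∩ D.carrier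

/-- The complete type of `a` over `A` (as the set of all param-formulas over `A`
satisfied by `a`). -/
def typeOf (A : Set M) (a : M) : Set (ParamFormula L M 1) :=
  {f | f.paramsIn A ∧ f.Realize fun _ => a}

/-- `φ(x̄, ȳ₀, …, ȳ_{k-1})` is `k`-independent: for every index set of size `< κ` there is
an array of parameter tuples such that every pattern on `^k ι` is (finitely) satisfiable. -/
def FormulaKIndep (M : Type u) [L.Structure M] (κ : Cardinal.{u}) (k nx : ℕ) (ny : Fin k → ℕ)
    (φ : L.Formula (Fin nx ⊕ ((ℓ : Fin k) × Fin (ny ℓ)))) : Prop :=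
  ∀ ι : Type u, #ι < κ →
    ∃ a : (ℓ : Fin k) → ι → Fin (ny ℓ) → M,
      ∀ (u : Set (Fin k → ι)) (s : Finset (Fin k → ι)),
        ∃ x : Fin nx → M,
          ∀ η ∈ s, ((φ.Realize (Sum.elim x fun p => a p.1 (η p.1) p.2)) ↔ η ∈ u)

/-- `Th(M)` is `k`-independent. -/
def KIndependent (L : FirstOrder.Language.{u, u}) (M : Type u) [L.Structure M] (κ : Cardinal.{u})
    (k : ℕ) : Prop :=
  ∃ (nx : ℕ) (ny : Fin k → ℕ) (φ : L.Formula (Fin nx ⊕ ((ℓ : Fin k) × Fin (ny ℓ)))),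
    FormulaKIndep M κ k nx ny φ

/-- `Th(M)` is `k`-dependent. -/
def KDependent (L : FirstOrder.Language.{u, u}) (M : Type u) [L.Structure M] (κ : Cardinal.{u})
    (k : ℕ) : Prop :=
  ¬ KIndependent L M κ k

section AuxLemmas

variable {L : FirstOrder.Language.{u, u}} {M : Type u} [L.Structure M]

/-- Realizing a formula as a bounded formula with 0 free bound variables. -/
lemma realize_aux {L : FirstOrder.Language.{u, u}} {M : Type u} [L.Structure M] {α : Type*}
    (φ : L.BoundedFormula α 0) (v : α → M) (xs : Fin 0 → M) :
    φ.Realize v xs ↔ FirstOrder.Language.Formula.Realize φ v := by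
  rw [show xs = default from Subsingleton.elim _ _]
  rfl

/-- Group calculation: `(s⁻¹d₁)⁻¹ (s⁻¹d₂) = d₁⁻¹ d₂` inside the carrier. -/
lemma group_calc (D : DefGroup L M) {s d1 d2 : M} (hs : s ∈ D.carrier) (h1 : d1 ∈ D.carrier)
    (h2 : d2 ∈ D.carrier) :
    D.mul (D.inv (D.mul (D.inv s) d1)) (D.mul (D.inv s) d2) = D.mul (D.inv d1) d2 := by
  have his := D.inv_mem' s hs
  have hu : D.mul (D.inv s) d1 ∈ D.carrier := D.mul_mem' _ his _ h1
  have hid1 := D.inv_mem' d1 h1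
  have hX : D.mul (D.inv d1) d2 ∈ D.carrier := D.mul_mem' _ hid1 _ h2
  have hiu := D.inv_mem' _ hu
  have hA : D.mul (D.mul (D.inv s) d1) (D.mul (D.inv d1) d2) = D.mul (D.inv s) d2 := by
    rw [D.mul_assoc' _ his _ h1 _ hX, ← D.mul_assoc' _ h1 _ hid1 _ h2, D.mul_inv' _ h1,
      D.one_mul' _ h2]
  rw [← hA, ← D.mul_assoc' _ hiu _ hu _ hX, D.inv_mul' _ hu, D.one_mul' _ hX]

/-- A product of elements of a subgroup lies in the subgroup. -/
lemma foldr_mem_subgroup (D : DefGroup L M) {H : Set M} (hH : D.IsSubgroup H) :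
    ∀ l : List M, (∀ x ∈ l, x ∈ H) → l.foldr D.mul D.one ∈ H := by
  intro l
  induction l with
  | nil => intro _; exact hH.2.1
  | cons a l ih =>
    intro h
    exact hH.2.2.1 _ (h a List.mem_cons_self) _ (ih fun x hx => h x (List.mem_cons_of_mem a hx))

/-- Composition: given a formula `f(y)` and `s`, there is a formula `ψ(x)` (with parameters
from `A* ∪ params f ∪ {s}`) equivalent to `f(s⁻¹ x)`. -/
lemma compose_formula (D : DefGroup L M) (f : ParamFormula L M 1) (s : M) :
    ∃ ψ : ParamFormula L M 1, ψ.paramsIn (D.AStar ∪ Set.range f.params ∪ {s}) ∧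
      ∀ x : M, ((ψ.Realize fun _ => x) ↔ f.Realize fun _ => D.mul (D.inv s) x) := by
  classical
  obtain ⟨φm, hφmP, hφm⟩ := D.mul_definable
  obtain ⟨φi, hφiP, hφi⟩ := D.inv_definable
  set P0 := (Fin 1 ⊕ (Fin φi.m ⊕ (Fin φm.m ⊕ Fin f.m))) with hP0
  let e : P0 ≃ Fin (1 + (φi.m + (φm.m + f.m))) :=
    (Equiv.sumCongr (Equiv.refl (Fin 1))
      ((Equiv.sumCongr (Equiv.refl (Fin φi.m))
        (finSumFinEquiv : Fin φm.m ⊕ Fin f.m ≃ _)).trans finSumFinEquiv)).trans finSumFinEquiv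
  let params0 : P0 → M := Sum.elim (fun _ => s) (Sum.elim φi.params (Sum.elim φm.params f.params))
  let V := (Fin 1 ⊕ P0)
  let gi : Fin 2 ⊕ Fin φi.m → V ⊕ Fin 2 :=
    Sum.elim ![Sum.inl (Sum.inr (Sum.inl 0)), Sum.inr 0]
      (fun j => Sum.inl (Sum.inr (Sum.inr (Sum.inl j))))
  let gm : Fin 3 ⊕ Fin φm.m → V ⊕ Fin 2 :=
    Sum.elim ![Sum.inr 0, Sum.inl (Sum.inl 0), Sum.inr 1]
      (fun j => Sum.inl (Sum.inr (Sum.inr (Sum.inr (Sum.inl j)))))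
  let gf : Fin 1 ⊕ Fin f.m → V ⊕ Fin 2 :=
    Sum.elim ![Sum.inr 1] (fun j => Sum.inl (Sum.inr (Sum.inr (Sum.inr (Sum.inr j)))))
  let χ : L.BoundedFormula V 2 :=
    (FirstOrder.Language.BoundedFormula.relabel gi φi.toFormula ⊓
      FirstOrder.Language.BoundedFormula.relabel gm φm.toFormula) ⊓
      FirstOrder.Language.BoundedFormula.relabel gf f.toFormula
  let θ : L.Formula V := χ.exs
  refine ⟨⟨1 + (φi.m + (φm.m + f.m)), θ.relabel (Sum.map id e), params0 ∘ e.symm⟩, ?_, ?_⟩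
  · intro i
    show params0 (e.symm i) ∈ _
    rcases e.symm i with j | (j | (j | j))
    · simp only [params0, Sum.elim_inl]
      exact Or.inr rfl
    · exact Or.inl (Or.inl (hφiP j))
    · exact Or.inl (Or.inl (hφmP j))
    · exact Or.inl (Or.inr ⟨j, rfl⟩)
  · intro x
    show (θ.relabel (Sum.map id e)).Realize
      (Sum.elim (fun _ => x) (params0 ∘ e.symm)) ↔ _
    rw [FirstOrder.Language.Formula.realize_relabel]
    have hcomp : (Sum.elim (fun _ : Fin 1 => x) (params0 ∘ e.symm)) ∘ Sum.map id e
        = Sum.elim (fun _ : Fin 1 => x) params0 := by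
      funext w
      rcases w with w | w
      · rfl
      · simp [Function.comp, Equiv.symm_apply_apply]
    rw [hcomp]
    show χ.exs.Realize _ ↔ _
    rw [FirstOrder.Language.BoundedFormula.realize_exs]
    have hχ : ∀ xs : Fin 2 → M, χ.Realize (Sum.elim (fun _ : Fin 1 => x) params0) xs ↔
        (D.inv s = xs 0 ∧ D.mul (xs 0) x = xs 1 ∧ (f.Realize fun _ => xs 1)) := by
      intro xs
      have hi : (FirstOrder.Language.BoundedFormula.relabel gi φi.toFormula).Realize
          (Sum.elim (fun _ : Fin 1 => x) params0) xs ↔ D.inv s = xs 0 := by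
        rw [FirstOrder.Language.BoundedFormula.realize_relabel, realize_aux]
        rw [← hφi s (xs 0)]
        show φi.toFormula.Realize _ ↔ φi.toFormula.Realize (Sum.elim ![s, xs 0] φi.params)
        rw [iff_iff_eq]
        congr 1
        funext w
        rcases w with w | w
        · fin_cases w <;> rfl
        · rfl
      have hm : (FirstOrder.Language.BoundedFormula.relabel gm φm.toFormula).Realize
          (Sum.elim (fun _ : Fin 1 => x) params0) xs ↔ D.mul (xs 0) x = xs 1 := by
        rw [FirstOrder.Language.BoundedFormula.realize_relabel, realize_aux]
        rw [← hφm (xs 0) x (xs 1)]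
        show φm.toFormula.Realize _ ↔ φm.toFormula.Realize (Sum.elim ![xs 0, x, xs 1] φm.params)
        rw [iff_iff_eq]
        congr 1
        funext w
        rcases w with w | w
        · fin_cases w <;> rfl
        · rfl
      have hf : (FirstOrder.Language.BoundedFormula.relabel gf f.toFormula).Realize
          (Sum.elim (fun _ : Fin 1 => x) params0) xs ↔ (f.Realize fun _ => xs 1) := by
        rw [FirstOrder.Language.BoundedFormula.realize_relabel, realize_aux]
        show f.toFormula.Realize _ ↔ f.toFormula.Realize (Sum.elim (fun _ => xs 1) f.params)
        rw [iff_iff_eq]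
        congr 1
        funext w
        rcases w with w | w
        · fin_cases w <;> rfl
        · rfl
      simp only [χ, FirstOrder.Language.BoundedFormula.realize_inf]
      rw [hi, hm, hf]
      tauto
    constructor
    · rintro ⟨xs, hxs⟩
      obtain ⟨h1, h2, h3⟩ := (hχ xs).mp hxs
      rwa [← h2, ← h1] at h3
    · intro h
      exact ⟨![D.inv s, D.mul (D.inv s) x], (hχ _).mpr (by simp; exact h)⟩

end AuxLemmas

/-- Corollary 1.8 of [Sh:886]: any union-type-definable subgroup of `G` of bounded index
contains a subgroup of the form `⋃_{n<ω} q^n_{ā}(𝔠)` for some `ā ∈ ^{κ̄>}𝔠` with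
`A* ⊆ Rang(ā)`. -/
theorem corollary_h1321
    {L : FirstOrder.Language.{u, u}} {M : Type u} [L.Structure M]
    (κbar : Cardinal.{u}) (hκinacc : κbar.IsInaccessible) (hκT : theoryCard L < κbar)
    (hκsat : Saturated L M κbar)
    (D : DefGroup L M) (hAκ : #(D.AStar) < κbar)
    (H : Set M) (hH : D.IsSubgroup H)
    (hdef : UnionTypeDefinable L H κbar) (hidx : D.indexLT H κbar) :
    ∃ (β : Type u) (a : β → M), #β < κbar ∧ D.AStar ⊆ Set.range a ∧
      (⋃ n : ℕ, D.qTupleSet a n) ⊆ H := by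
  classical
  obtain ⟨B0, hB0, ι, hι, P, hPover, hHeq⟩ := hdef
  obtain ⟨S, hScar, hScard, hScov⟩ := hidx
  have hℵ : ℵ₀ < κbar := hκinacc.1
  set B : Set M := D.AStar ∪ B0 ∪ S with hB
  have hBκ : #B < κbar := by
    refine lt_of_le_of_lt (mk_union_le _ _) (Cardinal.add_lt_of_lt hℵ.le ?_ hScard)
    exact lt_of_le_of_lt (mk_union_le _ _) (Cardinal.add_lt_of_lt hℵ.le hAκ hB0)
  refine ⟨B, Subtype.val, hBκ, ?_, ?_⟩
  · rw [Subtype.range_coe]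
    exact fun x hx => Or.inl (Or.inl hx)
  · intro c hc
    simp only [Set.mem_iUnion] at hc
    obtain ⟨n, d, hdcar, hdsame, hceq⟩ := hc
    rw [hceq]
    apply foldr_mem_subgroup D hH
    intro x hx
    rw [List.mem_ofFn] at hx
    obtain ⟨ℓ, rfl⟩ := hx
    obtain ⟨s, hsS, hsH⟩ := hScov (d ℓ).1 (hdcar ℓ).1
    have huH : D.mul (D.inv s) (d ℓ).1 ∈ H := hsH
    rw [hHeq] at hsH
    obtain ⟨i, hui⟩ := Set.mem_iUnion.mp hsH
    have hv : D.mul (D.inv s) (d ℓ).2 ∈ realizeSet (P i) := by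
      intro f hf
      obtain ⟨ψ, hψP, hψR⟩ := compose_formula D f s
      have hψB : ψ.paramsIn (Set.range (Subtype.val : B → M)) := by
        rw [Subtype.range_coe]
        intro j
        rcases hψP j with (h | h) | h
        · exact Or.inl (Or.inl h)
        · obtain ⟨k, hk⟩ := h
          exact Or.inl (Or.inr (hk ▸ hPover i f hf k))
        · rw [show ψ.params j = s from h]
          exact Or.inr hsS
      have h1 : ψ.Realize (fun _ => (d ℓ).1) := (hψR _).mpr (hui f hf)
      exact (hψR _).mp ((hdsame ℓ ψ hψB).mp h1)
    have hvH : D.mul (D.inv s) (d ℓ).2 ∈ H := by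
      rw [hHeq]
      exact Set.mem_iUnion.mpr ⟨i, hv⟩
    have hmem := hH.2.2.1 _ (hH.2.2.2 _ huH) _ hvH
    rwa [group_calc D (hScar hsS) (hdcar ℓ).1 (hdcar ℓ).2] at hmem

end Paper886
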